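/- arXiv:2004.04324 — 4 statements merged into one kernel-verified Lean document; each statement's English description precedes it below -/
import Mathlib

section
/- Any subset S of the plane with finite diameter d is contained in a closed disk of radius (√3/2)·d. More precisely, if x, y ∈ S satisfy |x - y| = d and every z ∈ S satisfies |z - x| ≤ d and |z - y| ≤ d, then S is contained in the closed disk of radius (√3/2)·d centered at the midpoint of x and y. -/
open Metric

theorem stmt_2 (S : Set ℂ) (d : ℝ) (x y : ℂ) (hx : x ∈ S) (hy : y ∈ S)
    (hd : ‖x - y‖ = d)
    (h : ∀ z ∈ S, ‖z - x‖ ≤ d ∧ ‖z - y‖ ≤ d) :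
    S ⊆ Metric.closedBall ((x + y) / 2) (Real.sqrt 3 / 2 * d) := by
  intro z hz
  obtain ⟨h1, h2⟩ := h z hz
  have hd0 : 0 ≤ d := hd ▸ norm_nonneg _
  rw [mem_closedBall, Complex.dist_eq]
  have hmid : z - (x + y) / 2 = ((z - x) + (z - y)) / 2 := by ring
  have E : ∀ w : ℂ, ‖w‖ ^ 2 = w.re ^ 2 + w.im ^ 2 := fun w => by
    rw [Complex.sq_norm, Complex.normSq_apply]; ring
  have hab : ‖(z - x) - (z - y)‖ = d := by
    rw [show (z - x) - (z - y) = -(x - y) by ring, norm_neg, hd]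
  -- squared bounds
  have s1 : ‖z - x‖ ^ 2 ≤ d ^ 2 := by
    nlinarith [norm_nonneg (z - x)]
  have s2 : ‖z - y‖ ^ 2 ≤ d ^ 2 := by
    nlinarith [norm_nonneg (z - y)]
  have key : ‖(z - x) + (z - y)‖ ^ 2 ≤ 3 * d ^ 2 := by
    have e1 := E (z - x)
    have e2 := E (z - y)
    have e3 := E ((z - x) + (z - y))
    have e4 := E ((z - x) - (z - y))
    rw [hab] at e4
    simp only [Complex.add_re, Complex.add_im, Complex.sub_re, Complex.sub_im] at e1 e2 e3 e4
    nlinarith [s1, s2, e1, e2, e3, e4]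
  have h3 : Real.sqrt 3 ^ 2 = 3 := Real.sq_sqrt (by norm_num)
  have hs3 : (0:ℝ) ≤ Real.sqrt 3 := Real.sqrt_nonneg 3
  have hfin : ‖(z - x) + (z - y)‖ ≤ Real.sqrt 3 * d := by
    nlinarith [norm_nonneg ((z - x) + (z - y)), mul_nonneg hs3 hd0]
  rw [hmid, norm_div]
  simp only [Complex.norm_two]
  linarith
end

section
/- Define sequences (R_n) and (r_n) by R_1 = √(2|c|), R_{n+1} = √(|c| + R_n), r_1 = 0, r_{n+1} = √(|c| - R_n), where c ∈ ℂ with |c| > 2. Then (R_n) is monotone decreasing and (r_n) is monotone increasing. -/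
noncomputable def Rseq (a : ℝ) : ℕ → ℝ
  | 0 => Real.sqrt (2 * a)
  | n + 1 => Real.sqrt (a + Rseq a n)

noncomputable def rseq (a : ℝ) : ℕ → ℝ
  | 0 => 0
  | n + 1 => Real.sqrt (a - Rseq a n)

lemma Rseq_succ_le (a : ℝ) (ha : 2 < a) : ∀ n, Rseq a (n + 1) ≤ Rseq a n := by
  intro n
  induction n with
  | zero =>
    show Real.sqrt (a + Real.sqrt (2 * a)) ≤ Real.sqrt (2 * a)
    have ha0 : (0:ℝ) ≤ a := by linarith
    have h1 : Real.sqrt (2 * a) ≤ a := by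
      have h2 := Real.sq_sqrt (show (0:ℝ) ≤ 2*a by linarith)
      nlinarith [Real.sqrt_nonneg (2*a)]
    calc Real.sqrt (a + Real.sqrt (2*a)) ≤ Real.sqrt (a + a) :=
          Real.sqrt_le_sqrt (by linarith)
      _ = Real.sqrt (2 * a) := by ring_nf
  | succ n ih =>
    show Real.sqrt (a + Rseq a (n+1)) ≤ Real.sqrt (a + Rseq a n)
    exact Real.sqrt_le_sqrt (by linarith)

/-- Here `Rseq a n` is `R_{n+1}` and `rseq a n` is `r_{n+1}` of the paper. -/
theorem stmt_6 (c : ℂ) (hc : 2 < ‖c‖) :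
    Antitone (Rseq (‖c‖)) ∧ Monotone (rseq (‖c‖)) := by
  set a := ‖c‖
  constructor
  · exact antitone_nat_of_succ_le (Rseq_succ_le a hc)
  · apply monotone_nat_of_le_succ
    intro n
    match n with
    | 0 => exact Real.sqrt_nonneg _
    | n + 1 =>
      show Real.sqrt (a - Rseq a n) ≤ Real.sqrt (a - Rseq a (n+1))
      have := Rseq_succ_le a hc n
      exact Real.sqrt_le_sqrt (by linarith)
end

section
/- Let c ∈ ℂ with |c| > 2, Q(z) = z² + c, D = {z : |z| ≤ |c|}. For every n ≥ 1 and every z ∈ Q^{-n}(D) (i.e., z with Q^k(z) ∈ D for all 0 ≤ k ≤ n), one has r_n ≤ |z| ≤ R_n, where R_1 = √(2|c|), R_{n+1} = √(|c| + R_n), r_1 = 0, r_{n+1} = √(|c| - R_n). -/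
lemma Rseq_nonneg (a : ℝ) (n : ℕ) : 0 ≤ Rseq a n := by
  cases n <;> simp [Rseq, Real.sqrt_nonneg]

lemma habs1 (z c : ℂ) : ‖z ^ 2‖ ≤ ‖z ^ 2 + c‖ + ‖c‖ := by
  calc ‖z ^ 2‖ = ‖(z ^ 2 + c) + (-c)‖ := by ring_nf
    _ ≤ ‖z ^ 2 + c‖ + ‖-c‖ := norm_add_le _ _
    _ = ‖z ^ 2 + c‖ + ‖c‖ := by rw [norm_neg]

lemma habs2 (z c : ℂ) : ‖c‖ ≤ ‖z ^ 2 + c‖ + ‖z ^ 2‖ := by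
  calc ‖c‖ = ‖(z ^ 2 + c) + (-(z ^ 2))‖ := by ring_nf
    _ ≤ ‖z ^ 2 + c‖ + ‖-(z ^ 2)‖ := norm_add_le _ _
    _ = ‖z ^ 2 + c‖ + ‖z ^ 2‖ := by rw [norm_neg]

/-- `Rseq a n = R_{n+1}`, `rseq a n = r_{n+1}`; membership in `Q^{-(n+1)}(D)` means
`Q^k z ∈ D` for all `0 ≤ k ≤ n+1`. -/
theorem stmt_11 (c : ℂ) (hc : 2 < ‖c‖) (n : ℕ) (z : ℂ)
    (hz : ∀ k ≤ n + 1, ‖(fun w => w ^ 2 + c)^[k] z‖ ≤ ‖c‖) :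
    rseq (‖c‖) n ≤ ‖z‖ ∧ ‖z‖ ≤ Rseq (‖c‖) n := by
  induction n generalizing z with
  | zero =>
    have h1 := hz 1 (by norm_num)
    simp only [Function.iterate_one] at h1
    refine ⟨by simp [rseq], ?_⟩
    rw [Rseq, Real.le_sqrt (norm_nonneg z) (by positivity)]
    have hp : ‖z‖ ^ 2 = ‖z ^ 2‖ := (norm_pow _ _).symm
    have := habs1 z c
    nlinarith
  | succ n ih =>
    have hz' : ∀ k ≤ n + 1,
        ‖(fun w => w ^ 2 + c)^[k] (z ^ 2 + c)‖ ≤ ‖c‖ := by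
      intro k hk
      have := hz (k + 1) (by omega)
      rwa [Function.iterate_succ_apply] at this
    have hQ := (ih (z ^ 2 + c) hz').2
    have hp : ‖z‖ ^ 2 = ‖z ^ 2‖ := (norm_pow _ _).symm
    constructor
    · rw [rseq]
      have h2 := habs2 z c
      have hle : ‖c‖ - Rseq (‖c‖) n ≤ ‖z‖ ^ 2 := by nlinarith
      calc Real.sqrt (‖c‖ - Rseq (‖c‖) n)
          ≤ Real.sqrt (‖z‖ ^ 2) := Real.sqrt_le_sqrt hle
        _ = ‖z‖ := Real.sqrt_sq (norm_nonneg z)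
    · rw [Rseq, Real.le_sqrt (norm_nonneg z) (by have := Rseq_nonneg (‖c‖) n; positivity)]
      have := habs1 z c
      nlinarith
end

section
/- Let c ∈ ℂ with |c| > 3 + √3, Q(z) = z² + c, D = {z : |z| ≤ |c|}, and let J = ⋂_{n≥0} Q^{-n}(D) be the Julia set (the set of points whose entire forward orbit stays in D). Then the two-dimensional Lebesgue measure of the difference set J - J = {x - y : x, y ∈ J} is zero. -/
open MeasureTheory Complex Filter
open scoped ENNReal NNReal
open scoped Pointwise

lemma aux_le_of_sq (a b : ℝ) (ha : 0 ≤ a) (hb : 0 ≤ b) (h : a^2 ≤ b^2) : a ≤ b := by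
  nlinarith

lemma aux_sector (w₁ w₂ : ℂ) (h1 : (w₁^2).re ≤ 0) (h2 : (w₂^2).re ≤ 0)
    (hn1 : w₁ ≠ 0) (hn2 : w₂ ≠ 0)
    (hs : (0 ≤ w₁.im ↔ 0 ≤ w₂.im)) : 0 ≤ (w₁ * (starRingEnd ℂ) w₂).re := by
  obtain ⟨x₁, y₁⟩ := w₁
  obtain ⟨x₂, y₂⟩ := w₂
  simp only [pow_two, Complex.mul_re, Complex.conj_re, Complex.conj_im] at *
  have hx1 : x₁^2 ≤ y₁^2 := by nlinarith
  have hx2 : x₂^2 ≤ y₂^2 := by nlinarith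
  by_cases hy : 0 ≤ y₁
  · have hy2 : 0 ≤ y₂ := hs.mp hy
    nlinarith [mul_nonneg hy hy2, mul_le_mul hx1 hx2 (sq_nonneg x₂) (sq_nonneg y₁),
      sq_nonneg (x₁*x₂ + y₁*y₂), sq_nonneg (x₁*x₂ - y₁*y₂)]
  · have hy2 : ¬ 0 ≤ y₂ := fun h => hy (hs.mpr h)
    push_neg at hy hy2
    nlinarith [mul_pos_of_neg_of_neg hy hy2, mul_le_mul hx1 hx2 (sq_nonneg x₂) (sq_nonneg y₁),
      sq_nonneg (x₁*x₂ + y₁*y₂), sq_nonneg (x₁*x₂ - y₁*y₂)]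

theorem stmt_15 (c : ℂ) (hc : 3 + Real.sqrt 3 < ‖c‖)
    (J : Set ℂ)
    (hJ : J = {z : ℂ | ∀ n : ℕ,
      ‖(fun w => w ^ 2 + c)^[n] z‖ ≤ ‖c‖}) :
    volume (J - J) = 0 := by
  set Q : ℂ → ℂ := fun w => w ^ 2 + c with hQdef
  set t := ‖c‖ with htdef
  have hsqrt3 : (1:ℝ) ≤ Real.sqrt 3 := by
    rw [show (3:ℝ) = 1^2 + 2 by norm_num]
    nlinarith [Real.sq_sqrt (show (0:ℝ) ≤ 1^2+2 by norm_num), Real.sqrt_nonneg (1^2+2:ℝ)]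
  have ht4 : 4 < t := by linarith
  set M := (1 + Real.sqrt (1 + 4*t))/2 with hMdef
  have hs2 : Real.sqrt (1+4*t)^2 = 1+4*t := Real.sq_sqrt (by linarith)
  have hsnn : 0 ≤ Real.sqrt (1+4*t) := Real.sqrt_nonneg _
  have hM1 : 1 ≤ M := by rw [hMdef]; nlinarith
  have hM2 : M^2 = M + t := by rw [hMdef]; nlinarith
  have hMt : M < t - 2 := by
    have h6 : t^2 - 6*t + 6 > 0 := by nlinarith [Real.sq_sqrt (show (0:ℝ) ≤ 3 by norm_num)]
    rw [hMdef]; nlinarith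
  set d := t - M with hddef
  have hd2 : 2 < d := by rw [hddef]; linarith
  -- iterate formula
  have hiter : ∀ (z : ℂ) (k : ℕ), Q^[k+1] z = (Q^[k] z)^2 + c := by
    intro z k
    rw [Function.iterate_succ_apply' Q k z]
  -- membership in J
  have hJm : ∀ z ∈ J, ∀ k : ℕ, ‖Q^[k] z‖ ≤ t := by
    intro z hz k
    rw [hJ] at hz
    exact hz k
  have habs_sub_le : ∀ x y : ℂ, ‖x - y‖ ≤ ‖x‖ + ‖y‖ := by
    intro x y; exact norm_sub_le x y
  have habs_lb : ∀ x y : ℂ, ‖x‖ - ‖y‖ ≤ ‖y - x‖ := by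
    intro x y
    rw [norm_sub_rev]; exact norm_sub_norm_le x y
  -- orbit upper bound
  have h_orb_le : ∀ z ∈ J, ∀ k : ℕ, ‖Q^[k] z‖ ≤ M := by
    have key : ∀ j : ℕ, ∀ z ∈ J, ∀ k : ℕ, ‖Q^[k] z‖ ≤ M + t * (1/2)^j := by
      intro j
      induction j with
      | zero => intro z hz k; have := hJm z hz k; simp only [pow_zero]; linarith
      | succ j ih =>
        intro z hz k
        have h1 : ‖Q^[k+1] z‖ ≤ M + t * (1/2)^j := ih z hz (k+1)
        have h2 : (‖Q^[k] z‖)^2 ≤ M + t * (1/2)^j + t := by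
          have : (‖Q^[k] z‖)^2 = ‖Q^[k+1] z - c‖ := by
            rw [hiter z k]; rw [← norm_pow]; ring_nf
          rw [this]
          calc ‖Q^[k+1] z - c‖ ≤ ‖Q^[k+1] z‖ + ‖c‖ :=
                habs_sub_le _ _
            _ ≤ M + t * (1/2)^j + t := by rw [← htdef]; linarith
        have hpos : (0:ℝ) < (1/2:ℝ)^j := by positivity
        have hstep : M + t * (1/2)^j + t ≤ (M + t*((1/2)^j/2))^2 := by
          nlinarith [mul_nonneg (mul_nonneg (show (0:ℝ) ≤ M - 1 by linarith)
            (show (0:ℝ) ≤ t by linarith)) hpos.le, sq_nonneg (t*(1/2:ℝ)^j)]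
        have hE : M + t * (1/2:ℝ)^(j+1) = M + t * ((1/2:ℝ)^j / 2) := by rw [pow_succ]; ring
        rw [hE]
        exact aux_le_of_sq _ _ (norm_nonneg _) (by positivity) (le_trans h2 hstep)
    intro z hz k
    have htend : Tendsto (fun j : ℕ => M + t * (1/2)^j) atTop (nhds (M + t * 0)) := by
      exact tendsto_const_nhds.add ((tendsto_pow_atTop_nhds_zero_of_lt_one (by norm_num)
        (by norm_num)).const_mul t)
    rw [mul_zero, add_zero] at htend
    exact ge_of_tendsto' htend (fun j => key j z hz k)
  -- orbit lower bound
  have h_orb_ge : ∀ z ∈ J, ∀ k : ℕ, d ≤ (‖Q^[k] z‖)^2 := by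
    intro z hz k
    have : (‖Q^[k] z‖)^2 = ‖Q^[k+1] z - c‖ := by
      rw [hiter z k]; rw [← norm_pow]; ring_nf
    rw [this]
    have h1 : ‖Q^[k+1] z‖ ≤ M := h_orb_le z hz (k+1)
    have h2 := habs_lb c (Q^[k+1] z)
    rw [← htdef] at h2
    linarith
  -- sector condition
  have h_sec : ∀ z ∈ J, ∀ k : ℕ, ((Q^[k] z)^2 * (starRingEnd ℂ) c).re ≤ 0 := by
    intro z hz k
    have h1 : ‖(Q^[k] z)^2 + c‖ ≤ t := by
      rw [← hiter z k]; exact hJm z hz (k+1)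
    have h2 : Complex.normSq ((Q^[k] z)^2 + c) ≤ t^2 := by
      rw [← Complex.sq_norm]
      exact pow_le_pow_left₀ (norm_nonneg _) h1 2
    rw [Complex.normSq_add] at h2
    have h3 : Complex.normSq c = t^2 := by rw [htdef, ← Complex.sq_norm]
    nlinarith [Complex.normSq_nonneg ((Q^[k] z)^2)]
  -- square root of conj c
  have hc0 : c ≠ 0 := by
    intro h
    rw [htdef, h] at ht4
    simp at ht4
    linarith
  obtain ⟨b, hb⟩ := IsAlgClosed.exists_pow_nat_eq ((starRingEnd ℂ) c) (show 0 < 2 by norm_num)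
  have hb0 : b ≠ 0 := by
    intro h
    apply hc0
    rw [h] at hb
    simpa using hb.symm
  have hnb : Complex.normSq b = t := by
    have h1 : ‖b‖ ^ 2 = ‖b ^ 2‖ := (norm_pow b 2).symm
    rw [hb, Complex.norm_conj, ← htdef] at h1
    rw [← Complex.sq_norm, h1]
  -- dot product bound
  have h_dot : ∀ w₁ w₂ : ℂ, (w₁^2 * (starRingEnd ℂ) c).re ≤ 0 →
      (w₂^2 * (starRingEnd ℂ) c).re ≤ 0 →
      d ≤ (‖w₁‖)^2 → d ≤ (‖w₂‖)^2 →
      (decide (0 ≤ (w₁*b).im) = decide (0 ≤ (w₂*b).im)) →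
      2*d ≤ (‖w₁ + w₂‖)^2 := by
    intro w₁ w₂ hw1 hw2 hd1 hd2' hside
    have hw1n : w₁ * b ≠ 0 := by
      refine mul_ne_zero ?_ hb0
      intro h; rw [h] at hd1; simp at hd1; linarith
    have hw2n : w₂ * b ≠ 0 := by
      refine mul_ne_zero ?_ hb0
      intro h; rw [h] at hd2'; simp at hd2'; linarith
    have hsq1 : ((w₁*b)^2).re ≤ 0 := by rw [mul_pow, hb]; exact hw1
    have hsq2 : ((w₂*b)^2).re ≤ 0 := by rw [mul_pow, hb]; exact hw2
    have hiff : (0 ≤ (w₁*b).im ↔ 0 ≤ (w₂*b).im) := decide_eq_decide.mp hside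
    have h0 := aux_sector (w₁*b) (w₂*b) hsq1 hsq2 hw1n hw2n hiff
    have hre : (w₁*b) * (starRingEnd ℂ) (w₂*b) = (Complex.normSq b : ℂ) * (w₁ * (starRingEnd ℂ) w₂) := by
      rw [map_mul, ← Complex.mul_conj]
      ring
    rw [hre] at h0
    rw [Complex.re_ofReal_mul, hnb] at h0
    have h0' : 0 ≤ (w₁ * (starRingEnd ℂ) w₂).re := by nlinarith
    have hexp : (‖w₁+w₂‖)^2
        = Complex.normSq w₁ + Complex.normSq w₂ + 2*(w₁ * (starRingEnd ℂ) w₂).re := by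
      rw [Complex.sq_norm, Complex.normSq_add]
    rw [hexp, ← Complex.sq_norm w₁, ← Complex.sq_norm w₂]
    linarith
  -- expansion
  set r := Real.sqrt (2*d) with hrdef
  have hr2 : r^2 = 2*d := Real.sq_sqrt (by linarith)
  have hrpos : 0 < r := Real.sqrt_pos.mpr (by linarith)
  have h_exp : ∀ z₁ ∈ J, ∀ z₂ ∈ J, ∀ n : ℕ,
      (∀ k, k < n → decide (0 ≤ ((Q^[k] z₁) * b).im) = decide (0 ≤ ((Q^[k] z₂) * b).im)) →
      r^n * ‖z₁ - z₂‖ ≤ ‖Q^[n] z₁ - Q^[n] z₂‖ := by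
    intro z₁ hz₁ z₂ hz₂ n
    induction n with
    | zero => intro _; simp
    | succ n ih =>
      intro hside
      have ih' := ih (fun k hk => hside k (Nat.lt_succ_of_lt hk))
      have hA := h_dot (Q^[n] z₁) (Q^[n] z₂) (h_sec z₁ hz₁ n) (h_sec z₂ hz₂ n)
          (h_orb_ge z₁ hz₁ n) (h_orb_ge z₂ hz₂ n) (hside n (Nat.lt_succ_self n))
      have hAB : r ≤ ‖Q^[n] z₁ + Q^[n] z₂‖ :=
        aux_le_of_sq r _ hrpos.le (norm_nonneg _) (by rw [hr2]; exact hA)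
      have hfact : Q^[n+1] z₁ - Q^[n+1] z₂ = (Q^[n] z₁ - Q^[n] z₂) * (Q^[n] z₁ + Q^[n] z₂) := by
        rw [hiter z₁ n, hiter z₂ n]; ring
      rw [hfact, norm_mul, pow_succ]
      calc r^n * r * ‖z₁-z₂‖ = (r^n * ‖z₁-z₂‖) * r := by ring
      _ ≤ ‖Q^[n] z₁ - Q^[n] z₂‖ * ‖Q^[n] z₁ + Q^[n] z₂‖ :=
          mul_le_mul ih' hAB hrpos.le (norm_nonneg _)
  -- main bound for each n
  have h_main : ∀ n : ℕ, volume (J - J) ≤ ENNReal.ofReal (16 * Real.pi * t^2 * (2/d)^n) := by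
    intro n
    set P : (Fin n → Bool) → Set ℂ :=
      fun s => {z | z ∈ J ∧ ∀ k : Fin n, decide (0 ≤ ((Q^[(k:ℕ)] z) * b).im) = s k} with hP
    have hdiam : ∀ s, ∀ z₁ ∈ P s, ∀ z₂ ∈ P s, ‖z₁ - z₂‖ ≤ 2*t/r^n := by
      intro s z₁ h₁ z₂ h₂
      have he := h_exp z₁ h₁.1 z₂ h₂.1 n
        (fun k hk => (h₁.2 ⟨k, hk⟩).trans (h₂.2 ⟨k, hk⟩).symm)
      have hub : ‖Q^[n] z₁ - Q^[n] z₂‖ ≤ 2*t := by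
        have h3 := habs_sub_le (Q^[n] z₁) (Q^[n] z₂)
        have u1 := hJm z₁ h₁.1 n
        have u2 := hJm z₂ h₂.1 n
        linarith
      rw [le_div_iff₀ (pow_pos hrpos n)]
      calc ‖z₁-z₂‖ * r^n = r^n * ‖z₁ - z₂‖ := mul_comm _ _
      _ ≤ ‖Q^[n] z₁ - Q^[n] z₂‖ := he
      _ ≤ 2*t := hub
    have hcover : J - J ⊆ ⋃ p : (Fin n → Bool) × (Fin n → Bool), (P p.1 - P p.2) := by
      rintro x hx
      rw [Set.mem_sub] at hx
      obtain ⟨a, ha, b', hb', rfl⟩ := hx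
      refine Set.mem_iUnion.mpr ⟨(fun k => decide (0 ≤ ((Q^[(k:ℕ)] a) * b).im),
        fun k => decide (0 ≤ ((Q^[(k:ℕ)] b') * b).im)), ?_⟩
      exact Set.sub_mem_sub ⟨ha, fun k => rfl⟩ ⟨hb', fun k => rfl⟩
    have hball : ∀ p : (Fin n → Bool) × (Fin n → Bool),
        volume (P p.1 - P p.2) ≤ ENNReal.ofReal ((4*t/r^n)^2 * Real.pi) := by
      intro p
      by_cases hne : (P p.1 - P p.2).Nonempty
      · obtain ⟨x₀, hx₀⟩ := hne
        rw [Set.mem_sub] at hx₀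
        obtain ⟨a₀, ha₀, b₀, hb₀, rfl⟩ := hx₀
        have hsub : P p.1 - P p.2 ⊆ Metric.closedBall (a₀ - b₀) (4*t/r^n) := by
          rintro x hx
          rw [Set.mem_sub] at hx
          obtain ⟨a, ha, b', hb', rfl⟩ := hx
          rw [Metric.mem_closedBall, Complex.dist_eq]
          have e : (a - b') - (a₀ - b₀) = (a - a₀) - (b' - b₀) := by ring
          calc ‖(a - b') - (a₀ - b₀)‖
              ≤ ‖a - a₀‖ + ‖b' - b₀‖ := by
                rw [e]; exact habs_sub_le _ _
          _ ≤ 2*t/r^n + 2*t/r^n :=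
              add_le_add (hdiam _ a ha a₀ ha₀) (hdiam _ b' hb' b₀ hb₀)
          _ = 4*t/r^n := by ring
        calc volume (P p.1 - P p.2) ≤ volume (Metric.closedBall (a₀ - b₀) (4*t/r^n)) :=
            measure_mono hsub
        _ = ENNReal.ofReal (4*t/r^n) ^ 2 * NNReal.pi := Complex.volume_closedBall _ _
        _ = ENNReal.ofReal ((4*t/r^n)^2 * Real.pi) := by
            have hpi : ((NNReal.pi : ℝ≥0∞)) = ENNReal.ofReal Real.pi := by
              rw [← NNReal.coe_real_pi, ENNReal.ofReal_coe_nnreal]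
            rw [← ENNReal.ofReal_pow (by positivity), hpi,
              ← ENNReal.ofReal_mul (by positivity)]
      · rw [Set.not_nonempty_iff_eq_empty] at hne
        rw [hne, measure_empty]
        exact zero_le
    have hrn : (r^n)^2 = (2*d)^n := by rw [← pow_mul, mul_comm n 2, pow_mul, hr2]
    have hcard : ((Fintype.card ((Fin n → Bool) × (Fin n → Bool))) : ℝ) = 4^n := by
      simp [Fintype.card_prod, Fintype.card_fun]
      push_cast
      rw [← mul_pow]
      norm_num
    calc volume (J - J) ≤ volume (⋃ p : (Fin n → Bool) × (Fin n → Bool), (P p.1 - P p.2)) :=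
        measure_mono hcover
    _ ≤ ∑' p : (Fin n → Bool) × (Fin n → Bool), volume (P p.1 - P p.2) := measure_iUnion_le _
    _ ≤ ∑' _p : (Fin n → Bool) × (Fin n → Bool), ENNReal.ofReal ((4*t/r^n)^2 * Real.pi) :=
        ENNReal.tsum_le_tsum hball
    _ = (Fintype.card ((Fin n → Bool) × (Fin n → Bool))) • ENNReal.ofReal ((4*t/r^n)^2 * Real.pi) := by
        rw [tsum_fintype]
        simp [Finset.sum_const]
    _ = ENNReal.ofReal ((Fintype.card ((Fin n → Bool) × (Fin n → Bool)) : ℝ)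
          * ((4*t/r^n)^2 * Real.pi)) := by
        rw [nsmul_eq_mul, ← ENNReal.ofReal_natCast, ← ENNReal.ofReal_mul (by positivity)]
    _ = ENNReal.ofReal (16 * Real.pi * t^2 * (2/d)^n) := by
        congr 1
        rw [hcard, div_pow, div_pow, hrn]
        have hdn : (0:ℝ) < d := by linarith
        have h2d : ((2:ℝ)*d)^n = 2^n * d^n := mul_pow _ _ _
        have h4 : (4:ℝ)^n = 2^n * 2^n := by rw [← mul_pow]; norm_num
        have h2n : ((2:ℝ)^n) ≠ 0 := by positivity
        have hdnn : ((d:ℝ)^n) ≠ 0 := by positivity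
        rw [h2d, h4]
        field_simp
        ring
  -- conclusion
  have htend : Filter.Tendsto (fun n : ℕ => ENNReal.ofReal (16 * Real.pi * t^2 * (2/d)^n))
      atTop (nhds 0) := by
    have h1 : Filter.Tendsto (fun n : ℕ => 16 * Real.pi * t^2 * (2/d)^n) atTop
        (nhds (16 * Real.pi * t^2 * 0)) := by
      refine Filter.Tendsto.const_mul _ ?_
      exact tendsto_pow_atTop_nhds_zero_of_lt_one (by positivity)
        (by rw [div_lt_one (by linarith)]; linarith)
    rw [mul_zero] at h1
    have := (ENNReal.continuous_ofReal.tendsto 0).comp h1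
    simpa [Function.comp_def] using this
  have hle : volume (J - J) ≤ 0 := ge_of_tendsto' htend h_main
  exact le_antisymm hle zero_le
end
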